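/- Let φ, H, b be as follows: φ is the Laplace exponent of a driftless subordinator with Lévy tail w satisfying (Ker.), H(λ) = φ(λ) − λφ'(λ), and b(s) = s φ'(H^{−1}(1/s)). Then for every s > 0, φ(s^{−1})^{−1} ≤ b^{−1}(s) ≤ ((e²−e)/(e−2)) φ(s^{−1})^{−1}. -/

import Mathlib

open MeasureTheory Real Set Filter Topology

lemma exp1_gt2 : (2:ℝ) < Real.exp 1 := by
  have := Real.exp_one_gt_d9; linarith

lemma aux_ineq1 (x : ℝ) (hx : 0 ≤ x) : x * Real.exp (-x) ≤ 1 - Real.exp (-x) := by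
  have h1 := Real.add_one_le_exp x
  have h2 : Real.exp (-x) * Real.exp x = 1 := by rw [← Real.exp_add]; simp
  nlinarith [Real.exp_pos (-x)]

lemma aux_ineq2 (x : ℝ) (hx : 1 ≤ x) : 1 - 2 / Real.exp 1 ≤ 1 - Real.exp (-x) - x * Real.exp (-x) := by
  have h1 := Real.add_one_le_exp (x - 1)
  have h3 : (1 + x) * Real.exp (-x) ≤ 2 / Real.exp 1 := by
    rw [div_eq_mul_inv, ← Real.exp_neg]
    have h4 : (1 + x) ≤ 2 * Real.exp (x - 1) := by nlinarith
    have h5 : (0:ℝ) < Real.exp (-x) := Real.exp_pos _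
    calc (1+x) * Real.exp (-x) ≤ (2 * Real.exp (x-1)) * Real.exp (-x) := by nlinarith
      _ = 2 * Real.exp (-1) := by rw [mul_assoc, ← Real.exp_add]; ring_nf
  linarith

lemma aux_ineq3 (x : ℝ) : 1 - Real.exp (-x) ≤ x := by
  have := Real.add_one_le_exp (-x); linarith

lemma aux_ineq4 (x : ℝ) (hx : 0 ≤ x) : 0 ≤ 1 - Real.exp (-x) := by
  have : Real.exp (-x) ≤ 1 := Real.exp_le_one_iff.mpr (by linarith)
  linarith

lemma ae_pos (μ : Measure ℝ) (hμ_supp : μ (Iic 0) = 0) : ∀ᵐ t ∂μ, 0 < t := by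
  rw [ae_iff]
  convert hμ_supp using 2
  ext t; simp [not_lt]

lemma integrable_of_bound (μ : Measure ℝ) (hμ_supp : μ (Iic 0) = 0)
    (hμ_int : ∫⁻ s, ENNReal.ofReal (min 1 s) ∂μ < ⊤)
    (f : ℝ → ℝ) (hf : Measurable f) (C : ℝ)
    (hC : ∀ t, 0 < t → |f t| ≤ C * min 1 t) : Integrable f μ := by
  refine ⟨hf.aestronglyMeasurable, ?_⟩
  have hae : ∀ᵐ t ∂μ, (‖f t‖₊ : ENNReal) ≤ ENNReal.ofReal C * ENNReal.ofReal (min 1 t) := by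
    filter_upwards [ae_pos μ hμ_supp] with t ht
    have h1 := hC t ht
    rw [← ENNReal.ofReal_mul' (le_min (by norm_num) ht.le)]
    rw [← enorm_eq_nnnorm, ← ofReal_norm]
    exact ENNReal.ofReal_le_ofReal (by rwa [Real.norm_eq_abs])
  show ∫⁻ t, (‖f t‖₊ : ENNReal) ∂μ < ⊤
  calc ∫⁻ t, (‖f t‖₊ : ENNReal) ∂μ ≤ ∫⁻ t, ENNReal.ofReal C * ENNReal.ofReal (min 1 t) ∂μ :=
        lintegral_mono_ae hae
    _ = ENNReal.ofReal C * ∫⁻ t, ENNReal.ofReal (min 1 t) ∂μ := by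
        rw [lintegral_const_mul]
        exact (ENNReal.measurable_ofReal.comp ((measurable_const.min measurable_id)))
    _ < ⊤ := ENNReal.mul_lt_top ENNReal.ofReal_lt_top hμ_int

lemma tail_eq (w : ℝ → ℝ) (μ : Measure ℝ)
    (hw_infty : Tendsto w atTop (nhds 0))
    (hμ_tail : ∀ a b, 0 < a → a ≤ b → μ (Ioc a b) = ENNReal.ofReal (w a - w b))
    (a : ℝ) (ha : 0 < a) : μ (Ioi a) = ENNReal.ofReal (w a) := by
  have hunion : Ioi a = ⋃ n : ℕ, Ioc a (a + n) := by
    ext x; simp only [mem_Ioi, mem_iUnion, mem_Ioc]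
    constructor
    · intro hx
      obtain ⟨n, hn⟩ := exists_nat_ge (x - a)
      exact ⟨n, hx, by linarith⟩
    · rintro ⟨n, hn, -⟩; exact hn
  have hmono : Monotone (fun n : ℕ => Ioc a (a + n)) := by
    intro m n hmn x hx
    exact ⟨hx.1, hx.2.trans (by simp [Nat.cast_le.mpr hmn])⟩
  rw [hunion, Directed.measure_iUnion (hmono.directed_le)]
  have heq : ∀ n : ℕ, μ (Ioc a (a + n)) = ENNReal.ofReal (w a - w (a + n)) := by
    intro n; exact hμ_tail a (a + n) ha (by linarith [Nat.cast_nonneg (α := ℝ) n])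
  have hlim : Tendsto (fun n : ℕ => μ (Ioc a (a + n))) atTop (nhds (ENNReal.ofReal (w a))) := by
    simp_rw [heq]
    have h1 : Tendsto (fun n : ℕ => w (a + n)) atTop (nhds 0) :=
      hw_infty.comp (tendsto_atTop_add_const_left _ _ tendsto_natCast_atTop_atTop)
    have h2 : Tendsto (fun n : ℕ => w a - w (a + n)) atTop (nhds (w a)) := by
      simpa using (tendsto_const_nhds (x := w a)).sub h1
    exact (ENNReal.continuous_ofReal.tendsto _).comp h2
  have hmono2 : Monotone (fun n : ℕ => μ (Ioc a (a + n))) := fun m n hmn => measure_mono (hmono hmn)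
  exact (tendsto_nhds_unique (tendsto_atTop_iSup hmono2) hlim).symm ▸ rfl

lemma alg1 (E p : ℝ) (h2 : 2 < E) : p / ((E^2 - E)/(E - 2)) * (E/(E - 2)) = p / (E - 1) := by
  have h3 : E - 2 ≠ 0 := by linarith
  have h4 : E - 1 ≠ 0 := by linarith
  have h5 : E ≠ 0 := by linarith
  have h6 : E^2 - E ≠ 0 := by nlinarith
  field_simp

lemma alg2 (E p : ℝ) (h2 : 2 < E) : E⁻¹ * (p - p/(E-1)) = p / ((E^2 - E)/(E-2)) := by
  have h3 : E - 2 ≠ 0 := by linarith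
  have h4 : E - 1 ≠ 0 := by linarith
  have h5 : E ≠ 0 := by linarith
  have h6 : E^2 - E ≠ 0 := by nlinarith
  field_simp
  ring

lemma alg3 (E q : ℝ) (h2 : 2 < E) : q = (E-2)/E * q * (E/(E-2)) := by
  have h3 : E - 2 ≠ 0 := by linarith
  have h5 : E ≠ 0 := by linarith
  field_simp

lemma alg4 (Cv p u : ℝ) (hC : Cv ≠ 0) (hp : p ≠ 0) : Cv * p⁻¹ * (u * (p / Cv)) = u := by
  field_simp

/-- For every `s > 0`, `φ(s⁻¹)⁻¹ ≤ b⁻¹(s) ≤ ((e²-e)/(e-2)) φ(s⁻¹)⁻¹`, where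
`b(s) = s φ'(H⁻¹(1/s))`. -/
theorem b_inverse_comparable_phi_inverse
    (w φ H Hinv b binv : ℝ → ℝ) (μ : Measure ℝ)
    (hw_nonneg : ∀ s, 0 < s → 0 ≤ w s)
    (hw_anti : ∀ s t, 0 < s → s ≤ t → w t ≤ w s)
    (hw_rc : ∀ s, 0 < s → Tendsto w (nhdsWithin s (Ioi s)) (nhds (w s)))
    (hw_zero : Tendsto w (nhdsWithin 0 (Ioi 0)) atTop)
    (hw_infty : Tendsto w atTop (nhds 0))
    (hμ_supp : μ (Iic 0) = 0)
    (hμ_tail : ∀ a b, 0 < a → a ≤ b → μ (Ioc a b) = ENNReal.ofReal (w a - w b))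
    (hμ_int : ∫⁻ s, ENNReal.ofReal (min 1 s) ∂μ < ⊤)
    (hφ : ∀ l, 0 ≤ l → φ l = ∫ s, (1 - Real.exp (-l * s)) ∂μ)
    (hH : ∀ l, 0 < l → H l = φ l - l * deriv φ l)
    (hH_mono : StrictMonoOn H (Ioi 0))
    (hφ'_anti : StrictAntiOn (deriv φ) (Ioi 0))
    (hφ'_pos : ∀ l, 0 < l → 0 < deriv φ l)
    (hHinv : ∀ y, 0 < y → 0 < Hinv y ∧ H (Hinv y) = y)
    (hb : ∀ s, 0 < s → b s = s * deriv φ (Hinv s⁻¹))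
    (hbinv : ∀ s, 0 < s → 0 < binv s ∧ b (binv s) = s)
    (hφpos : ∀ l, 0 < l → 0 < φ l) :
    ∀ s, 0 < s →
      (φ s⁻¹)⁻¹ ≤ binv s ∧
      binv s ≤ (Real.exp 1 ^ 2 - Real.exp 1) / (Real.exp 1 - 2) * (φ s⁻¹)⁻¹ := by
  have he0 : (0:ℝ) < Real.exp 1 := Real.exp_pos 1
  have he2 : (2:ℝ) < Real.exp 1 := exp1_gt2
  have aeP : ∀ᵐ t ∂μ, 0 < t := ae_pos μ hμ_supp
  -- integrability facts
  have int_f : ∀ l : ℝ, 0 ≤ l → Integrable (fun t => 1 - Real.exp (-l * t)) μ := by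
    intro l hl
    apply integrable_of_bound μ hμ_supp hμ_int _ (by fun_prop) (max 1 l)
    intro t ht
    have h1 : 0 ≤ 1 - Real.exp (-l*t) := by
      have := aux_ineq4 (l*t) (by positivity); rw [← neg_mul] at this; exact this
    have h2 : 1 - Real.exp (-l*t) ≤ l*t := by
      have := aux_ineq3 (l*t); rw [← neg_mul] at this; exact this
    rw [abs_of_nonneg h1]
    rcases le_total t 1 with h|h
    · rw [min_eq_right h]
      calc 1 - Real.exp (-l*t) ≤ l * t := h2
        _ ≤ max 1 l * t := mul_le_mul_of_nonneg_right (le_max_right 1 l) ht.le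
    · rw [min_eq_left h]
      have h3 : 1 - Real.exp (-l*t) ≤ 1 := by nlinarith [Real.exp_pos (-l*t)]
      calc 1 - Real.exp (-l*t) ≤ 1 := h3
        _ ≤ max 1 l * 1 := by rw [mul_one]; exact le_max_left 1 l
  have int_g : ∀ l : ℝ, 0 < l → Integrable (fun t => t * Real.exp (-l * t)) μ := by
    intro l hl
    apply integrable_of_bound μ hμ_supp hμ_int _ (by fun_prop) (max 1 (4 / l^2))
    intro t ht
    have hE : (0:ℝ) < Real.exp (-l*t) := Real.exp_pos _
    rw [abs_of_nonneg (by positivity)]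
    rcases le_total t 1 with h|h
    · rw [min_eq_right h]
      have hle1 : Real.exp (-l*t) ≤ 1 := Real.exp_le_one_iff.mpr (by nlinarith)
      calc t * Real.exp (-l*t) ≤ t * 1 := mul_le_mul_of_nonneg_left hle1 ht.le
        _ ≤ max 1 (4/l^2) * t := by rw [mul_one]; nlinarith [le_max_left 1 (4/l^2)]
    · rw [min_eq_left h]
      have hsq : (l*t)^2/4 ≤ Real.exp (l*t) := by
        have h1 := Real.add_one_le_exp (l*t/2)
        have h2 : Real.exp (l*t/2) * Real.exp (l*t/2) = Real.exp (l*t) := by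
          rw [← Real.exp_add]; ring_nf
        have h6 : l*t/2 ≤ Real.exp (l*t/2) := by linarith
        nlinarith [mul_le_mul h6 h6 (by positivity : (0:ℝ) ≤ l*t/2) (Real.exp_pos (l*t/2)).le]
      have hinv : Real.exp (-l*t) * Real.exp (l*t) = 1 := by
        rw [← Real.exp_add]; ring_nf; exact Real.exp_zero
      have hl2 : (0:ℝ) < l^2 := by positivity
      have key : t * Real.exp (-l*t) ≤ 4 / l^2 := by
        rw [le_div_iff₀ hl2]
        have h5 : l^2 * t ≤ 4 * Real.exp (l*t) := by nlinarith
        nlinarith [Real.exp_pos (l*t)]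
      calc t * Real.exp (-l*t) ≤ 4/l^2 := key
        _ ≤ max 1 (4/l^2) * 1 := by rw [mul_one]; exact le_max_right 1 (4/l^2)
  have int_ind_id : ∀ c : ℝ, 0 < c → Integrable ((Ioc 0 c).indicator (fun t => t)) μ := by
    intro c hc
    apply integrable_of_bound μ hμ_supp hμ_int _
      (measurable_id'.indicator measurableSet_Ioc) (max 1 c)
    intro t ht
    by_cases htc : t ∈ Ioc 0 c
    · rw [indicator_of_mem htc]
      rw [abs_of_nonneg ht.le]
      rcases le_total t 1 with h|h
      · rw [min_eq_right h]; nlinarith [le_max_left 1 c]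
      · rw [min_eq_left h, mul_one]
        exact le_trans htc.2 (le_max_right 1 c)
    · rw [indicator_of_notMem htc]
      simp only [abs_zero]
      positivity
  have int_ind_exp : ∀ l c : ℝ, 0 < l → 0 < c →
      Integrable ((Ioc 0 c).indicator (fun t => t * Real.exp (-l * t))) μ := by
    intro l c hl hc
    apply integrable_of_bound μ hμ_supp hμ_int _
      ((measurable_id'.mul (by fun_prop)).indicator measurableSet_Ioc) (max 1 c)
    intro t ht
    have hE : Real.exp (-l*t) ≤ 1 := Real.exp_le_one_iff.mpr (by nlinarith)
    have hE0 : (0:ℝ) < Real.exp (-l*t) := Real.exp_pos _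
    by_cases htc : t ∈ Ioc 0 c
    · rw [indicator_of_mem htc]
      simp only [Pi.mul_apply]
      rw [abs_of_nonneg (by positivity)]
      have h1 : t * Real.exp (-l*t) ≤ t := by nlinarith
      rcases le_total t 1 with h|h
      · rw [min_eq_right h]
        nlinarith [mul_le_mul_of_nonneg_right (le_max_left 1 c) ht.le]
      · rw [min_eq_left h, mul_one]
        exact le_trans (le_trans h1 htc.2) (le_max_right 1 c)
    · rw [indicator_of_notMem htc]
      simp only [abs_zero]
      positivity
  have int_ind_const : ∀ k c : ℝ, 0 < c → Integrable ((Ioi c).indicator (fun _ => k)) μ := by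
    intro k c hc
    apply integrable_of_bound μ hμ_supp hμ_int _
      (measurable_const.indicator measurableSet_Ioi) (|k| * max 1 c⁻¹)
    intro t ht
    by_cases htc : t ∈ Ioi c
    · rw [indicator_of_mem htc]
      have htc' : c < t := htc
      rcases le_total t 1 with h|h
      · rw [min_eq_right h]
        have h1 : 1 ≤ c⁻¹ * t := by
          nlinarith [inv_pos.mpr hc, mul_inv_cancel₀ (ne_of_gt hc)]
        calc |k| = |k| * 1 := (mul_one _).symm
          _ ≤ |k| * (c⁻¹ * t) := mul_le_mul_of_nonneg_left h1 (abs_nonneg k)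
          _ ≤ |k| * (max 1 c⁻¹ * t) :=
              mul_le_mul_of_nonneg_left
                (mul_le_mul_of_nonneg_right (le_max_right 1 c⁻¹) ht.le) (abs_nonneg k)
          _ = |k| * max 1 c⁻¹ * t := (mul_assoc _ _ _).symm
      · rw [min_eq_left h, mul_one]
        calc |k| = |k| * 1 := (mul_one _).symm
          _ ≤ |k| * max 1 c⁻¹ := mul_le_mul_of_nonneg_left (le_max_left 1 c⁻¹) (abs_nonneg k)
    · rw [indicator_of_notMem htc]
      simp only [abs_zero]
      positivity
  -- differentiability of φ on (0,∞)
  have hasD : ∀ l : ℝ, 0 < l → HasDerivAt φ (deriv φ l) l := by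
    intro l hl
    by_cases h : DifferentiableAt ℝ φ l
    · exact h.hasDerivAt
    · exact absurd (hφ'_pos l hl)
        (by rw [deriv_zero_of_not_differentiableAt h]; exact lt_irrefl 0)
  have phi_diff : ∀ x l : ℝ, 0 ≤ x → 0 ≤ l →
      φ x - φ l = ∫ t, (Real.exp (-l*t) - Real.exp (-x*t)) ∂μ := by
    intro x l hx hl
    rw [hφ x hx, hφ l hl, ← integral_sub (int_f x hx) (int_f l hl)]
    congr 1; ext t; ring
  have int_diff : ∀ x l : ℝ, 0 ≤ x → 0 ≤ l →
      Integrable (fun t => Real.exp (-l*t) - Real.exp (-x*t)) μ := by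
    intro x l hx hl
    exact ((int_f x hx).sub (int_f l hl)).congr (ae_of_all _ (fun t => by simp only [Pi.sub_apply]; ring))
  -- upper bound on the derivative
  have derivK : ∀ l : ℝ, 0 < l → deriv φ l ≤ ∫ t, t * Real.exp (-l*t) ∂μ := by
    intro l hl
    have h2 : Tendsto (slope φ l) (𝓝[>] l) (𝓝 (deriv φ l)) :=
      ((hasDerivAt_iff_tendsto_slope).mp (hasD l hl)).mono_left
        (nhdsWithin_mono l (fun x (hx : l < x) => mem_compl_singleton_iff.mpr hx.ne'))
    refine le_of_tendsto h2 ?_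
    filter_upwards [self_mem_nhdsWithin] with x hx
    have hxl : l < x := hx
    rw [slope_def_field, div_le_iff₀ (by linarith)]
    rw [phi_diff x l (by linarith) hl.le]
    calc ∫ t, (Real.exp (-l*t) - Real.exp (-x*t)) ∂μ
        ≤ ∫ t, (x - l) * (t * Real.exp (-l*t)) ∂μ := by
          refine integral_mono_ae (int_diff x l (by linarith) hl.le)
            ((int_g l hl).const_mul _) ?_
          filter_upwards [aeP] with t ht
          have hsplit : Real.exp (-x*t) = Real.exp (-l*t) * Real.exp (-((x-l)*t)) := by
            rw [← Real.exp_add]; ring_nf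
          have h3 := aux_ineq3 ((x-l)*t)
          nlinarith [Real.exp_pos (-l*t), Real.exp_pos (-((x-l)*t))]
      _ = (∫ t, t * Real.exp (-l*t) ∂μ) * (x - l) := by
          rw [integral_const_mul]; ring
  -- lower bound on the derivative
  have derivJ : ∀ l c : ℝ, 0 < l → 0 < c →
      (∫ t, (Ioc 0 c).indicator (fun t => t * Real.exp (-l*t)) t ∂μ) ≤ deriv φ l := by
    intro l c hl hc
    have h2 : Tendsto (slope φ l) (𝓝[<] l) (𝓝 (deriv φ l)) :=
      ((hasDerivAt_iff_tendsto_slope).mp (hasD l hl)).mono_left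
        (nhdsWithin_mono l (fun x (hx : x < l) => mem_compl_singleton_iff.mpr hx.ne))
    refine ge_of_tendsto h2 ?_
    have hev : ∀ᶠ x in 𝓝[<] l, 0 < x :=
      Filter.Eventually.filter_mono nhdsWithin_le_nhds (eventually_gt_nhds hl)
    filter_upwards [self_mem_nhdsWithin, hev] with x hx hx0
    have hxl : x < l := hx
    have hslope : slope φ l x = (φ l - φ x) / (l - x) := by
      rw [slope_def_field, ← neg_div_neg_eq]; ring_nf
    rw [hslope, le_div_iff₀ (by linarith)]
    rw [phi_diff l x hl.le hx0.le]
    calc (∫ t, (Ioc 0 c).indicator (fun t => t * Real.exp (-l*t)) t ∂μ) * (l - x)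
        = ∫ t, (l - x) * (Ioc 0 c).indicator (fun t => t * Real.exp (-l*t)) t ∂μ := by
          rw [integral_const_mul]; ring
      _ ≤ ∫ t, (Real.exp (-x*t) - Real.exp (-l*t)) ∂μ := by
          refine integral_mono_ae ((int_ind_exp l c hl hc).const_mul _)
            (int_diff l x hl.le hx0.le) ?_
          filter_upwards [aeP] with t ht
          have hsplit : Real.exp (-l*t) = Real.exp (-x*t) * Real.exp (-((l-x)*t)) := by
            rw [← Real.exp_add]; ring_nf
          by_cases htc : t ∈ Ioc 0 c
          · rw [indicator_of_mem htc]
            have h1 := aux_ineq1 ((l-x)*t) (by nlinarith)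
            nlinarith [Real.exp_pos (-x*t), Real.exp_pos (-((l-x)*t)),
              mul_le_mul_of_nonneg_left h1 (Real.exp_pos (-x*t)).le]
          · rw [indicator_of_notMem htc, mul_zero]
            have : Real.exp (-l*t) ≤ Real.exp (-x*t) := Real.exp_le_exp.mpr (by nlinarith)
            linarith
  -- lower bound via truncated first moment
  have derivI : ∀ l : ℝ, 0 < l →
      (Real.exp 1)⁻¹ * (∫ t, (Ioc 0 l⁻¹).indicator (fun t => t) t ∂μ) ≤ deriv φ l := by
    intro l hl
    have hc : (0:ℝ) < l⁻¹ := by positivity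
    refine le_trans ?_ (derivJ l l⁻¹ hl hc)
    rw [← integral_const_mul]
    refine integral_mono_ae (((int_ind_id l⁻¹ hc).const_mul _)) (int_ind_exp l l⁻¹ hl hc) ?_
    filter_upwards [aeP] with t ht
    by_cases htc : t ∈ Ioc 0 l⁻¹
    · rw [indicator_of_mem htc, indicator_of_mem htc]
      have h1 : l * t ≤ 1 := by
        have := htc.2
        calc l * t ≤ l * l⁻¹ := mul_le_mul_of_nonneg_left this hl.le
          _ = 1 := mul_inv_cancel₀ (ne_of_gt hl)
      have h2 : (Real.exp 1)⁻¹ ≤ Real.exp (-l*t) := by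
        rw [← Real.exp_neg]
        exact Real.exp_le_exp.mpr (by linarith)
      calc (Real.exp 1)⁻¹ * t ≤ Real.exp (-l*t) * t :=
            mul_le_mul_of_nonneg_right h2 ht.le
        _ = t * Real.exp (-l*t) := mul_comm _ _
    · rw [indicator_of_notMem htc, indicator_of_notMem htc, mul_zero]
  -- upper bound on φ
  have phiUB : ∀ l c : ℝ, 0 < l → 0 < c →
      φ l ≤ l * (∫ t, (Ioc 0 c).indicator (fun t => t) t ∂μ) + w c := by
    intro l c hl hc
    rw [hφ l hl.le]
    have hint1 := (int_ind_id c hc).const_mul l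
    have hint2 := int_ind_const 1 c hc
    have hle : ∫ t, (1 - Real.exp (-l*t)) ∂μ ≤
        ∫ t, (l * (Ioc 0 c).indicator (fun t => t) t + (Ioi c).indicator (fun _ => (1:ℝ)) t) ∂μ := by
      refine integral_mono_ae (int_f l hl.le) (hint1.add hint2) ?_
      filter_upwards [aeP] with t ht
      by_cases htc : t ≤ c
      · have hmem : t ∈ Ioc 0 c := ⟨ht, htc⟩
        have hnot : t ∉ Ioi c := by simp [htc, not_lt]
        rw [indicator_of_mem hmem, indicator_of_notMem hnot, add_zero]
        have := aux_ineq3 (l*t); rw [← neg_mul] at this; exact this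
      · have hmem : t ∈ Ioi c := by simp at htc ⊢; linarith
        have hnot : t ∉ Ioc 0 c := by simp; intro _; linarith [lt_of_not_ge htc]
        rw [indicator_of_mem hmem, indicator_of_notMem hnot, mul_zero, zero_add]
        nlinarith [Real.exp_pos (-l*t)]
    refine le_trans hle ?_
    rw [integral_add hint1 hint2, integral_const_mul, integral_indicator_const (1:ℝ) measurableSet_Ioi, measureReal_def]
    rw [tail_eq w μ hw_infty hμ_tail c hc, ENNReal.toReal_ofReal (hw_nonneg c hc)]
    simp
  -- lower bound on H
  have HLB : ∀ l : ℝ, 0 < l → (1 - 2/Real.exp 1) * w l⁻¹ ≤ H l := by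
    intro l hl
    have hc : (0:ℝ) < l⁻¹ := by positivity
    rw [hH l hl]
    have h1 : φ l - l * ∫ t, t * Real.exp (-l*t) ∂μ ≤ φ l - l * deriv φ l := by
      have := mul_le_mul_of_nonneg_left (derivK l hl) hl.le
      linarith
    refine le_trans ?_ h1
    have hint2 : Integrable (fun t => l * (t * Real.exp (-l*t))) μ := (int_g l hl).const_mul l
    have heq : φ l - l * ∫ t, t * Real.exp (-l*t) ∂μ
        = ∫ t, ((1 - Real.exp (-l*t)) - l * (t * Real.exp (-l*t))) ∂μ := by
      rw [hφ l hl.le, ← integral_const_mul, ← integral_sub (int_f l hl.le) hint2]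
    rw [heq]
    have hLHS : (1 - 2/Real.exp 1) * w l⁻¹
        = ∫ t, (Ioi l⁻¹).indicator (fun _ => (1 - 2/Real.exp 1)) t ∂μ := by
      rw [integral_indicator_const _ measurableSet_Ioi, measureReal_def,
        tail_eq w μ hw_infty hμ_tail l⁻¹ hc, ENNReal.toReal_ofReal (hw_nonneg l⁻¹ hc)]
      simp [mul_comm]
    rw [hLHS]
    refine integral_mono_ae (int_ind_const _ l⁻¹ hc)
      ((int_f l hl.le).sub hint2) ?_
    filter_upwards [aeP] with t ht
    by_cases htc : t ∈ Ioi l⁻¹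
    · rw [indicator_of_mem htc]
      have hlt : 1 ≤ l * t := by
        have h2 : l⁻¹ < t := htc
        calc (1:ℝ) = l * l⁻¹ := (mul_inv_cancel₀ (ne_of_gt hl)).symm
          _ ≤ l * t := mul_le_mul_of_nonneg_left h2.le hl.le
      have := aux_ineq2 (l*t) hlt
      rw [← neg_mul] at this
      nlinarith
    · rw [indicator_of_notMem htc]
      have h1 := aux_ineq1 (l*t) (by positivity)
      rw [← neg_mul] at h1
      nlinarith
  -- nonnegativity of H and consequences
  have Hnn : ∀ l : ℝ, 0 < l → 0 ≤ H l := by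
    intro l hl
    refine le_trans ?_ (HLB l hl)
    have h1 : (0:ℝ) ≤ 1 - 2/Real.exp 1 := by
      rw [sub_nonneg, div_le_one he0]; linarith
    exact mul_nonneg h1 (hw_nonneg l⁻¹ (by positivity))
  -- monotonicity of Hinv and b
  have hHinvlt : ∀ y1 y2 : ℝ, 0 < y1 → y1 < y2 → Hinv y1 < Hinv y2 := by
    intro y1 y2 hy1 hy12
    by_contra hcon
    push_neg at hcon
    have h1 := (hHinv y1 hy1).1
    have h2 := (hHinv y2 (by linarith)).1
    rcases eq_or_lt_of_le hcon with heq | hlt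
    · have := (hHinv y1 hy1).2
      rw [← heq] at this
      rw [(hHinv y2 (by linarith)).2] at this
      linarith
    · have := hH_mono h2 h1 hlt
      rw [(hHinv y1 hy1).2, (hHinv y2 (by linarith)).2] at this
      linarith
  have hbmono : ∀ t1 t2 : ℝ, 0 < t1 → t1 < t2 → b t1 < b t2 := by
    intro t1 t2 ht1 ht12
    have ht2 : 0 < t2 := lt_trans ht1 ht12
    rw [hb t1 ht1, hb t2 ht2]
    have hi : t2⁻¹ < t1⁻¹ := by
      apply inv_strictAnti₀ ht1 ht12
    have hm := hHinvlt t2⁻¹ t1⁻¹ (by positivity) hi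
    have hp1 := (hHinv t1⁻¹ (by positivity)).1
    have hp2 := (hHinv t2⁻¹ (by positivity)).1
    have hanti := hφ'_anti (mem_Ioi.mpr hp2) (mem_Ioi.mpr hp1) hm
    have hpos1 := hφ'_pos _ hp1
    exact mul_lt_mul'' ht12 hanti ht1.le hpos1.le
  -- main argument
  intro s hs
  have hsi : (0:ℝ) < s⁻¹ := by positivity
  have hphl : 0 < φ s⁻¹ := hφpos _ hsi
  have hbinvs := hbinv s hs
  have hem2 : (0:ℝ) < Real.exp 1 - 2 := by linarith
  have hem1 : (0:ℝ) < Real.exp 1 - 1 := by linarith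
  have hC : (0:ℝ) < (Real.exp 1^2 - Real.exp 1)/(Real.exp 1 - 2) := by
    apply div_pos (by nlinarith) hem2
  constructor
  · -- lower bound
    have hx0 : 0 < (φ s⁻¹)⁻¹ := by positivity
    have hm := hHinv (φ s⁻¹) hphl
    have hmlt : s⁻¹ < Hinv (φ s⁻¹) := by
      by_contra hcon
      push_neg at hcon
      have hHs : H s⁻¹ < φ s⁻¹ := by
        rw [hH s⁻¹ hsi]
        nlinarith [hφ'_pos s⁻¹ hsi]
      rcases eq_or_lt_of_le hcon with heq | hlt
      · have h2 := hm.2; rw [heq] at h2; linarith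
      · have h2 := hH_mono (mem_Ioi.mpr hm.1) (mem_Ioi.mpr hsi) hlt
        rw [hm.2] at h2; linarith
    have hanti := hφ'_anti (mem_Ioi.mpr hsi) (mem_Ioi.mpr hm.1) hmlt
    have hderle : s⁻¹ * deriv φ s⁻¹ ≤ φ s⁻¹ := by
      have := Hnn s⁻¹ hsi; rw [hH s⁻¹ hsi] at this; linarith
    have hbx : b (φ s⁻¹)⁻¹ ≤ s := by
      rw [hb _ hx0, inv_inv]
      have h2 : deriv φ (Hinv (φ s⁻¹)) ≤ deriv φ s⁻¹ := le_of_lt hanti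
      have h3 : deriv φ s⁻¹ ≤ s * φ s⁻¹ := by
        have h4 := mul_le_mul_of_nonneg_left hderle hs.le
        rw [← mul_assoc, mul_inv_cancel₀ (ne_of_gt hs), one_mul] at h4
        exact h4
      calc (φ s⁻¹)⁻¹ * deriv φ (Hinv (φ s⁻¹)) ≤ (φ s⁻¹)⁻¹ * (s * φ s⁻¹) :=
            mul_le_mul_of_nonneg_left (h2.trans h3) hx0.le
        _ = s := by
            rw [mul_comm s (φ s⁻¹), ← mul_assoc, inv_mul_cancel₀ (ne_of_gt hphl), one_mul]
    by_contra hcon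
    push_neg at hcon
    have hlt := hbmono (binv s) (φ s⁻¹)⁻¹ hbinvs.1 hcon
    rw [hbinvs.2] at hlt
    linarith
  · -- upper bound
    set C := (Real.exp 1^2 - Real.exp 1)/(Real.exp 1 - 2) with hCdef
    have hu0 : 0 < C * (φ s⁻¹)⁻¹ := mul_pos hC (inv_pos.mpr hphl)
    have hy : 0 < φ s⁻¹ / C := div_pos hphl hC
    have hm' := hHinv (φ s⁻¹ / C) hy
    set m' := Hinv (φ s⁻¹ / C) with hm'def
    have huinv : (C * (φ s⁻¹)⁻¹)⁻¹ = φ s⁻¹ / C := by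
      rw [mul_inv, inv_inv]; ring
    have hwb : w m'⁻¹ ≤ φ s⁻¹ / (Real.exp 1 - 1) := by
      have h1 := HLB m' hm'.1
      rw [hm'.2] at h1
      have h2 : (1 - 2/Real.exp 1) = (Real.exp 1 - 2)/Real.exp 1 := by field_simp
      rw [h2] at h1
      have h3 : φ s⁻¹ / C * (Real.exp 1/(Real.exp 1 - 2)) = φ s⁻¹ / (Real.exp 1 - 1) := by
        rw [hCdef]; exact alg1 _ _ he2
      have h6 := mul_le_mul_of_nonneg_right h1 (div_pos he0 hem2).le
      calc w m'⁻¹ = (Real.exp 1 - 2)/Real.exp 1 * w m'⁻¹ * (Real.exp 1/(Real.exp 1 - 2)) :=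
            alg3 _ _ he2
        _ ≤ φ s⁻¹ / C * (Real.exp 1/(Real.exp 1 - 2)) := h6
        _ = φ s⁻¹ / (Real.exp 1 - 1) := h3
    have hI := derivI m' hm'.1
    have hUB := phiUB s⁻¹ m'⁻¹ hsi (inv_pos.mpr hm'.1)
    set I := ∫ t, (Ioc 0 m'⁻¹).indicator (fun t => t) t ∂μ with hIdef
    have hkey : φ s⁻¹ / C ≤ s⁻¹ * deriv φ m' := by
      have h9 : (Real.exp 1)⁻¹ * (φ s⁻¹ - φ s⁻¹/(Real.exp 1 - 1)) = φ s⁻¹ / C := by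
        rw [hCdef]; exact alg2 _ _ he2
      calc φ s⁻¹ / C = (Real.exp 1)⁻¹ * (φ s⁻¹ - φ s⁻¹/(Real.exp 1 - 1)) := h9.symm
        _ ≤ (Real.exp 1)⁻¹ * (φ s⁻¹ - w m'⁻¹) := by
            apply mul_le_mul_of_nonneg_left (by linarith [hwb]) (by positivity)
        _ ≤ (Real.exp 1)⁻¹ * (s⁻¹ * I) := by
            apply mul_le_mul_of_nonneg_left (by linarith [hUB]) (by positivity)
        _ = s⁻¹ * ((Real.exp 1)⁻¹ * I) := by ring
        _ ≤ s⁻¹ * deriv φ m' := mul_le_mul_of_nonneg_left hI hsi.le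
    have hbu : s ≤ b (C * (φ s⁻¹)⁻¹) := by
      rw [hb _ hu0, huinv, ← hm'def]
      have h10 := mul_le_mul_of_nonneg_left hkey hs.le
      rw [← mul_assoc, mul_inv_cancel₀ (ne_of_gt hs), one_mul] at h10
      have h11 : C * (φ s⁻¹)⁻¹ * (s * (φ s⁻¹ / C)) = s :=
        alg4 _ _ _ (ne_of_gt hC) (ne_of_gt hphl)
      calc s = C * (φ s⁻¹)⁻¹ * (s * (φ s⁻¹ / C)) := h11.symm
        _ ≤ C * (φ s⁻¹)⁻¹ * deriv φ m' := mul_le_mul_of_nonneg_left h10 hu0.le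
    by_contra hcon
    push_neg at hcon
    have hlt := hbmono (C * (φ s⁻¹)⁻¹) (binv s) hu0 hcon
    rw [hbinvs.2] at hlt
    linarith
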